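/- An index I satisfies additivity, reasonable lower bound, equal global impact of users, order preservation, and non-unilateral manipulability if and only if there exists, for each finite set of artists N, a positive real number λ_N such that for every streaming problem (N, M, t) and every i ∈ N, I_i(N, M, t) = λ_N · Sh_i(N, M, t); in particular, the associated reward rule of such an I coincides with the Shapley index. -/

import Mathlib

open Finset

/-- A streaming problem: a finite nonempty set `N` of artists, a finite nonempty set
`M` of users, and a streams matrix `t` such that every user streamed some content. -/
structure StreamingProblem where
  N : Finset ℕ
  M : Finset ℕ
  t : ℕ → ℕ → ℕ
  N_nonempty : N.Nonempty
  M_nonempty : M.Nonempty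
  streams_pos : ∀ j ∈ M, 0 < ∑ i ∈ N, t i j

namespace StreamingProblem

/-- `L^j` : the set of artists streamed by user `j`. -/
def Lset (P : StreamingProblem) (j : ℕ) : Finset ℕ :=
  P.N.filter fun i => 0 < P.t i j

/-- `F_i` : the set of fans of artist `i`. -/
def Fset (P : StreamingProblem) (i : ℕ) : Finset ℕ :=
  P.M.filter fun j => 0 < P.t i j

/-- The Shapley index: `Sh_i(N,M,t) = ∑_{j ∈ M : t_{ij} > 0} 1 / |L^j|`. -/
noncomputable def Sh (P : StreamingProblem) (i : ℕ) : ℝ :=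
  ∑ j ∈ P.M.filter (fun j => 0 < P.t i j), (1 : ℝ) / ((P.Lset j).card : ℝ)

end StreamingProblem

open StreamingProblem

/-- Additivity of an index. -/
def AdditiveIndex (I : StreamingProblem → ℕ → ℝ) : Prop :=
  ∀ P P₁ P₂ : StreamingProblem,
    P₁.N = P.N → P₂.N = P.N →
    P.M = P₁.M ∪ P₂.M → Disjoint P₁.M P₂.M →
    (∀ i ∈ P.N, ∀ j ∈ P₁.M, P.t i j = P₁.t i j) →
    (∀ i ∈ P.N, ∀ j ∈ P₂.M, P.t i j = P₂.t i j) →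
    ∀ i ∈ P.N, I P i = I P₁ i + I P₂ i

/-- Reasonable lower bound of an index. -/
def ReasonableLowerBound (I : StreamingProblem → ℕ → ℝ) : Prop :=
  ∀ P : StreamingProblem, ∀ C ⊆ P.M,
    (C.card : ℝ) ≤
      (∑ i ∈ P.N.filter (fun i => ∃ j ∈ C, 0 < P.t i j), I P i) * (P.M.card : ℝ) /
        ∑ k ∈ P.N, I P k

/-- Equal global impact of users of an index. -/
def EqualGlobalImpactUsers (I : StreamingProblem → ℕ → ℝ) : Prop :=
  ∀ P Q Q' : StreamingProblem, ∀ j ∈ P.M, ∀ j' ∈ P.M, j ≠ j' →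
    Q.N = P.N → Q.M = P.M.erase j → Q.t = P.t →
    Q'.N = P.N → Q'.M = P.M.erase j' → Q'.t = P.t →
    ∑ i ∈ Q.N, I Q i = ∑ i ∈ Q'.N, I Q' i

/-- Symmetry on fans of an index. -/
def SymmetryOnFans (I : StreamingProblem → ℕ → ℝ) : Prop :=
  ∀ P : StreamingProblem, ∀ i ∈ P.N, ∀ i' ∈ P.N,
    P.Fset i = P.Fset i' → I P i = I P i'

/-- Order preservation of an index. -/
def OrderPreservation (I : StreamingProblem → ℕ → ℝ) : Prop :=
  ∀ P : StreamingProblem, ∀ i ∈ P.N, ∀ i' ∈ P.N,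
    (∀ j ∈ P.M, P.t i j ≤ P.t i' j) → I P i ≤ I P i'

/-- Non-unilateral manipulability of an index. -/
def NonUnilateralManipulability (I : StreamingProblem → ℕ → ℝ) : Prop :=
  ∀ P P' : StreamingProblem, ∀ i ∈ P.N,
    P'.N = P.N → P'.M = P.M →
    P.Fset i = P'.Fset i →
    (∀ j ∈ P.M, P.t i j ≤ P'.t i j) →
    (∀ k ∈ P.N, k ≠ i → ∀ j ∈ P.M, P.t k j = P'.t k j) →
    I P' i ≤ I P i

/-- Null artists axiom of an index. -/
def NullArtists (I : StreamingProblem → ℕ → ℝ) : Prop :=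
  ∀ P : StreamingProblem, ∀ i ∈ P.N, (∑ j ∈ P.M, P.t i j) = 0 → I P i = 0

/-- Equal impact of artists of an index. -/
def EqualImpactArtists (I : StreamingProblem → ℕ → ℝ) : Prop :=
  ∀ P Q Q' : StreamingProblem, ∀ i ∈ P.N, ∀ i' ∈ P.N, i ≠ i' →
    Q.N = P.N.erase i' → Q.M = P.M → Q.t = P.t →
    Q'.N = P.N.erase i → Q'.M = P.M → Q'.t = P.t →
    I P i - I Q i = I P i' - I Q' i'

/-- An index assigns nonnegative reals to the artists, with positive total sum. -/
def IsIndex (I : StreamingProblem → ℕ → ℝ) : Prop :=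
  ∀ P : StreamingProblem, (∀ i ∈ P.N, 0 ≤ I P i) ∧ 0 < ∑ i ∈ P.N, I P i

/-- The reward rule `R^I` associated with an index `I`. -/
noncomputable def Reward (I : StreamingProblem → ℕ → ℝ) (P : StreamingProblem) (i : ℕ) : ℝ :=
  I P i * (P.M.card : ℝ) / ∑ k ∈ P.N, I P k

section Aux

lemma Lset_nonempty (P : StreamingProblem) {j : ℕ} (hj : j ∈ P.M) : (P.Lset j).Nonempty := by
  have h := P.streams_pos j hj
  rcases Finset.exists_ne_zero_of_sum_ne_zero h.ne' with ⟨i, hi, hne⟩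
  exact ⟨i, Finset.mem_filter.2 ⟨hi, Nat.pos_of_ne_zero hne⟩⟩

lemma Lset_card_pos (P : StreamingProblem) {j : ℕ} (hj : j ∈ P.M) :
    (0 : ℝ) < ((P.Lset j).card : ℝ) := by
  exact_mod_cast (Lset_nonempty P hj).card_pos

lemma Sh_nonneg (P : StreamingProblem) (i : ℕ) : 0 ≤ P.Sh i :=
  Finset.sum_nonneg fun _ _ => by positivity

lemma Sh_eq_sum_ite (P : StreamingProblem) (i : ℕ) :
    P.Sh i = ∑ j ∈ P.M, (if 0 < P.t i j then (1 : ℝ) / ((P.Lset j).card : ℝ) else 0) := by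
  rw [StreamingProblem.Sh, Finset.sum_filter]

lemma inner_sum_one (P : StreamingProblem) {j : ℕ} (hj : j ∈ P.M) :
    ∑ i ∈ P.N, (if 0 < P.t i j then (1 : ℝ) / ((P.Lset j).card : ℝ) else 0) = 1 := by
  rw [← Finset.sum_filter]
  have : (P.N.filter fun i => 0 < P.t i j) = P.Lset j := rfl
  rw [this, Finset.sum_const, nsmul_eq_mul]
  have hc := Lset_card_pos P hj
  field_simp

lemma sum_Sh (P : StreamingProblem) : ∑ i ∈ P.N, P.Sh i = (P.M.card : ℝ) := by
  calc ∑ i ∈ P.N, P.Sh i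
      = ∑ i ∈ P.N, ∑ j ∈ P.M, (if 0 < P.t i j then (1 : ℝ) / ((P.Lset j).card : ℝ) else 0) := by
        exact Finset.sum_congr rfl fun i _ => Sh_eq_sum_ite P i
    _ = ∑ j ∈ P.M, ∑ i ∈ P.N, (if 0 < P.t i j then (1 : ℝ) / ((P.Lset j).card : ℝ) else 0) :=
        Finset.sum_comm
    _ = ∑ j ∈ P.M, (1 : ℝ) := Finset.sum_congr rfl fun j hj => inner_sum_one P hj
    _ = (P.M.card : ℝ) := by simp

end Aux
def sp1 (N : Finset ℕ) (hN : N.Nonempty) (j : ℕ) (c : ℕ → ℕ) (hc : 0 < ∑ i ∈ N, c i) :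
    StreamingProblem :=
  ⟨N, {j}, fun i _ => c i, hN, ⟨j, Finset.mem_singleton_self j⟩, fun _ _ => hc⟩

@[simp] lemma sp1_N (N hN j c hc) : (sp1 N hN j c hc).N = N := rfl
@[simp] lemma sp1_M (N hN j c hc) : (sp1 N hN j c hc).M = ({j} : Finset ℕ) := rfl
@[simp] lemma sp1_t (N hN j c hc) (i k : ℕ) : (sp1 N hN j c hc).t i k = c i := rfl

noncomputable def spCol (P : StreamingProblem) (j : ℕ) : StreamingProblem :=
  if hj : j ∈ P.M then
    ⟨P.N, {j}, fun i _ => P.t i j, P.N_nonempty, ⟨j, Finset.mem_singleton_self j⟩,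
      fun _ _ => P.streams_pos j hj⟩
  else ⟨{0}, {0}, fun _ _ => 1, ⟨0, by simp⟩, ⟨0, by simp⟩, fun _ _ => by simp⟩

lemma spCol_N (P : StreamingProblem) {j : ℕ} (hj : j ∈ P.M) : (spCol P j).N = P.N := by
  rw [spCol, dif_pos hj]
lemma spCol_M (P : StreamingProblem) {j : ℕ} (hj : j ∈ P.M) : (spCol P j).M = {j} := by
  rw [spCol, dif_pos hj]
lemma spCol_t (P : StreamingProblem) {j : ℕ} (hj : j ∈ P.M) :
    (spCol P j).t = fun i _ => P.t i j := by
  rw [spCol, dif_pos hj]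

lemma ones_pos (N : Finset ℕ) (hN : N.Nonempty) : 0 < ∑ i ∈ N, (fun _ => 1 : ℕ → ℕ) i := by
  simpa using hN.card_pos

/-- Extensionality: the index only depends on the values of `t` on `N × M`. -/
lemma ext0 {I : StreamingProblem → ℕ → ℝ} (hAdd : AdditiveIndex I)
    (P P' : StreamingProblem) (hN : P'.N = P.N) (hM : P'.M = P.M)
    (ht : ∀ i ∈ P.N, ∀ j ∈ P.M, P'.t i j = P.t i j) {i : ℕ} (hi : i ∈ P.N) :
    I P' i = I P i := by
  obtain ⟨j0, hj0⟩ := Infinite.exists_notMem_finset P.M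
  set Q0 := sp1 P.N P.N_nonempty j0 (fun _ => 1) (ones_pos P.N P.N_nonempty) with hQ0
  have hsp : ∀ j ∈ insert j0 P.M, 0 < ∑ i ∈ P.N, (if j = j0 then 1 else P.t i j) := by
    intro j hj
    rcases Finset.mem_insert.1 hj with h | h
    · subst h; simpa using P.N_nonempty.card_pos
    · have hne : j ≠ j0 := by rintro rfl; exact hj0 h
      calc 0 < ∑ i ∈ P.N, P.t i j := P.streams_pos j h
        _ = _ := (Finset.sum_congr rfl fun i _ => by rw [if_neg hne]).symm
  set Pp : StreamingProblem := ⟨P.N, insert j0 P.M, fun i j => if j = j0 then 1 else P.t i j,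
    P.N_nonempty, ⟨j0, Finset.mem_insert_self _ _⟩, hsp⟩ with hPp
  have hunion : Pp.M = P.M ∪ Q0.M := by
    show insert j0 P.M = P.M ∪ {j0}
    ext x; simp [or_comm]
  have hdisj : Disjoint P.M Q0.M := Finset.disjoint_singleton_right.2 hj0
  have h1 := hAdd Pp P Q0 rfl rfl hunion hdisj
    (fun i _ j hj => by
      show (if j = j0 then 1 else P.t i j) = P.t i j
      exact if_neg (by rintro rfl; exact hj0 hj))
    (fun i _ j hj => by
      have hjj : j = j0 := Finset.mem_singleton.1 hj
      subst hjj
      show (if j = j then 1 else P.t i j) = 1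
      rw [if_pos rfl]) i hi
  have h2 := hAdd Pp P' Q0 hN rfl (by rw [hunion, hM]) (hM ▸ hdisj)
    (fun i hi j hj => by
      show (if j = j0 then 1 else P.t i j) = P'.t i j
      have hjM : j ∈ P.M := hM ▸ hj
      rw [if_neg (by rintro rfl; exact hj0 hjM), ht i hi j hjM])
    (fun i _ j hj => by
      have hjj : j = j0 := Finset.mem_singleton.1 hj
      subst hjj
      show (if j = j then 1 else P.t i j) = 1
      rw [if_pos rfl]) i hi
  linarith
/-- Decomposition into single-user problems. -/
lemma decomp_aux {I : StreamingProblem → ℕ → ℝ} (hAdd : AdditiveIndex I) :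
    ∀ n (P : StreamingProblem), P.M.card = n → ∀ i ∈ P.N,
      I P i = ∑ j ∈ P.M, I (spCol P j) i := by
  intro n
  induction n with
  | zero =>
    intro P h
    exact absurd h (by simpa using P.M_nonempty.card_pos.ne')
  | succ n ih =>
    intro P hcard i hi
    obtain ⟨j, hj⟩ := P.M_nonempty
    by_cases hn : n = 0
    · subst hn
      obtain ⟨a, ha⟩ := Finset.card_eq_one.1 hcard
      have hja : j = a := Finset.mem_singleton.1 (ha ▸ hj)
      subst hja
      rw [ha, Finset.sum_singleton]
      refine (ext0 hAdd P (spCol P j) (spCol_N P hj) ((spCol_M P hj).trans ha.symm) ?_ hi).symm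
      intro k hk j' hj'
      have : j' = j := by rw [ha] at hj'; exact Finset.mem_singleton.1 hj'
      subst this
      rw [spCol_t P hj]
    · have herase_card : (P.M.erase j).card = n := by
        rw [Finset.card_erase_of_mem hj, hcard]; omega
      have herase_ne : (P.M.erase j).Nonempty := by
        rw [← Finset.card_pos, herase_card]; omega
      set P₁ : StreamingProblem := ⟨P.N, P.M.erase j, P.t, P.N_nonempty, herase_ne,
        fun j' hj' => P.streams_pos j' (Finset.mem_of_mem_erase hj')⟩ with hP₁
      have key := hAdd P P₁ (spCol P j) rfl (spCol_N P hj)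
        (by rw [spCol_M P hj]; ext x
            by_cases hx : x = j
            · subst hx; simp [hj]
            · simp [hP₁, Finset.mem_erase, hx])
        (by rw [spCol_M P hj]; exact Finset.disjoint_singleton_right.2 (Finset.notMem_erase j _))
        (fun _ _ _ _ => rfl)
        (fun k _ j' hj' => by
          rw [spCol_M P hj] at hj'
          have : j' = j := Finset.mem_singleton.1 hj'
          subst this
          rw [spCol_t P hj]) i hi
      have hIH := ih P₁ herase_card i hi
      have hcong : ∀ j' ∈ P.M.erase j, I (spCol P₁ j') i = I (spCol P j') i := by
        intro j' hj'
        have hj'M : j' ∈ P.M := Finset.mem_of_mem_erase hj'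
        refine ext0 hAdd (spCol P j') (spCol P₁ j')
          ((spCol_N P₁ hj').trans (spCol_N P hj'M).symm)
          ((spCol_M P₁ hj').trans (spCol_M P hj'M).symm) ?_ ?_
        · intro k hk j'' hj''
          rw [spCol_M P hj'M] at hj''
          have : j'' = j' := Finset.mem_singleton.1 hj''
          subst this
          rw [spCol_t P hj'M, spCol_t P₁ hj']
        · rw [spCol_N P hj'M]; exact hi
      rw [key, hIH, Finset.sum_congr rfl hcong, ← Finset.sum_erase_add P.M _ hj]
noncomputable def sig (I : StreamingProblem → ℕ → ℝ) (N : Finset ℕ) : ℝ :=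
  if hN : N.Nonempty then ∑ i ∈ N, I (sp1 N hN 0 (fun _ => 1) (ones_pos N hN)) i else 1

lemma sig_eq (I : StreamingProblem → ℕ → ℝ) {N : Finset ℕ} (hN : N.Nonempty) :
    sig I N = ∑ i ∈ N, I (sp1 N hN 0 (fun _ => 1) (ones_pos N hN)) i := by
  rw [sig, dif_pos hN]

lemma sig_pos {I : StreamingProblem → ℕ → ℝ} (hI : IsIndex I) (N : Finset ℕ) : 0 < sig I N := by
  by_cases hN : N.Nonempty
  · rw [sig_eq I hN]
    exact (hI (sp1 N hN 0 (fun _ => 1) (ones_pos N hN))).2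
  · rw [sig, dif_neg hN]; norm_num

/-- Two-user comparison: totals of single-user problems agree. -/
lemma pair_total {I : StreamingProblem → ℕ → ℝ} (hAdd : AdditiveIndex I)
    (hEGI : EqualGlobalImpactUsers I) (N : Finset ℕ) (hN : N.Nonempty)
    {j j' : ℕ} (hne : j ≠ j') (c c' : ℕ → ℕ) (hc : 0 < ∑ i ∈ N, c i)
    (hc' : 0 < ∑ i ∈ N, c' i) :
    ∑ i ∈ N, I (sp1 N hN j c hc) i = ∑ i ∈ N, I (sp1 N hN j' c' hc') i := by
  have hsp : ∀ k ∈ ({j, j'} : Finset ℕ), 0 < ∑ i ∈ N, (if k = j then c i else c' i) := by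
    intro k hk
    rcases Finset.mem_insert.1 hk with rfl | hk'
    · simpa using hc
    · have hkj' : k = j' := Finset.mem_singleton.1 hk'
      subst hkj'
      calc 0 < ∑ i ∈ N, c' i := hc'
        _ = _ := (Finset.sum_congr rfl fun i _ => by rw [if_neg (Ne.symm hne)]).symm
  set P2 : StreamingProblem := ⟨N, {j, j'}, fun i k => if k = j then c i else c' i, hN,
    ⟨j, Finset.mem_insert_self _ _⟩, hsp⟩ with hP2
  have hEj : ({j, j'} : Finset ℕ).erase j = {j'} :=
    Finset.erase_insert (by simpa using hne)
  have hEj' : ({j, j'} : Finset ℕ).erase j' = {j} := by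
    ext k
    simp only [Finset.mem_erase, Finset.mem_insert, Finset.mem_singleton]
    constructor
    · rintro ⟨h1, h2 | h2⟩
      · exact h2
      · exact absurd h2 h1
    · rintro rfl; exact ⟨hne, Or.inl rfl⟩
  set Q : StreamingProblem := ⟨N, {j'}, P2.t, hN, ⟨j', Finset.mem_singleton_self _⟩,
    fun k hk => hsp k (by rw [← hEj] at hk; exact Finset.mem_of_mem_erase hk)⟩ with hQ
  set Q' : StreamingProblem := ⟨N, {j}, P2.t, hN, ⟨j, Finset.mem_singleton_self _⟩,
    fun k hk => hsp k (by rw [← hEj'] at hk; exact Finset.mem_of_mem_erase hk)⟩ with hQ'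
  have hkey := hEGI P2 Q Q' j (Finset.mem_insert_self _ _)
    j' (Finset.mem_insert_of_mem (Finset.mem_singleton_self _)) hne rfl hEj.symm rfl rfl hEj'.symm rfl
  have e1 : ∀ i ∈ N, I Q i = I (sp1 N hN j' c' hc') i := by
    intro i hi
    refine ext0 hAdd (sp1 N hN j' c' hc') Q rfl rfl ?_ hi
    intro k hk j'' hj''
    have : j'' = j' := Finset.mem_singleton.1 hj''
    subst this
    show (if j'' = j then c k else c' k) = c' k
    rw [if_neg (Ne.symm hne)]
  have e2 : ∀ i ∈ N, I Q' i = I (sp1 N hN j c hc) i := by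
    intro i hi
    refine ext0 hAdd (sp1 N hN j c hc) Q' rfl rfl ?_ hi
    intro k hk j'' hj''
    have : j'' = j := Finset.mem_singleton.1 hj''
    subst this
    show (if j'' = j'' then c k else c' k) = c k
    rw [if_pos rfl]
  calc ∑ i ∈ N, I (sp1 N hN j c hc) i = ∑ i ∈ N, I Q' i :=
        (Finset.sum_congr rfl e2).symm
    _ = ∑ i ∈ N, I Q i := hkey.symm
    _ = ∑ i ∈ N, I (sp1 N hN j' c' hc') i := Finset.sum_congr rfl e1

lemma sp1_total {I : StreamingProblem → ℕ → ℝ} (hAdd : AdditiveIndex I)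
    (hEGI : EqualGlobalImpactUsers I) (N : Finset ℕ) (hN : N.Nonempty)
    (j : ℕ) (c : ℕ → ℕ) (hc : 0 < ∑ i ∈ N, c i) :
    ∑ i ∈ N, I (sp1 N hN j c hc) i = sig I N := by
  rw [sig_eq I hN]
  calc ∑ i ∈ N, I (sp1 N hN j c hc) i
      = ∑ i ∈ N, I (sp1 N hN (j+1) (fun _ => 1) (ones_pos N hN)) i :=
        pair_total hAdd hEGI N hN (by omega) c _ hc _
    _ = ∑ i ∈ N, I (sp1 N hN 0 (fun _ => 1) (ones_pos N hN)) i :=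
        pair_total hAdd hEGI N hN (by omega) _ _ _ _

/-- The total index value of any single-user problem is `sig I N`. -/
lemma single_total {I : StreamingProblem → ℕ → ℝ} (hAdd : AdditiveIndex I)
    (hEGI : EqualGlobalImpactUsers I) (P : StreamingProblem) {j : ℕ} (hM : P.M = {j}) :
    ∑ i ∈ P.N, I P i = sig I P.N := by
  have hjM : j ∈ P.M := by rw [hM]; exact Finset.mem_singleton_self j
  have hc : 0 < ∑ i ∈ P.N, P.t i j := P.streams_pos j hjM
  have e : ∀ i ∈ P.N, I P i = I (sp1 P.N P.N_nonempty j (fun k => P.t k j) hc) i := by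
    intro i hi
    refine (ext0 hAdd P (sp1 P.N P.N_nonempty j (fun k => P.t k j) hc) rfl hM.symm ?_ hi).symm
    intro k hk j' hj'
    rw [hM] at hj'
    have : j' = j := Finset.mem_singleton.1 hj'
    subst this
    rfl
  rw [Finset.sum_congr rfl e, sp1_total hAdd hEGI]
/-- In a single-user problem, artists with zero streams get zero. -/
lemma single_zero {I : StreamingProblem → ℕ → ℝ} (hI : IsIndex I)
    (hRLB : ReasonableLowerBound I) (P : StreamingProblem) {j : ℕ} (hM : P.M = {j})
    {i : ℕ} (hi : i ∈ P.N) (h0 : P.t i j = 0) : I P i = 0 := by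
  have hC := hRLB P {j} (by rw [hM])
  have hT : 0 < ∑ k ∈ P.N, I P k := (hI P).2
  have hMc : (P.M.card : ℝ) = 1 := by rw [hM]; simp
  rw [hMc, mul_one, Finset.card_singleton, Nat.cast_one] at hC
  have hST : ∑ k ∈ P.N, I P k ≤
      ∑ k ∈ P.N.filter (fun k => ∃ j' ∈ ({j} : Finset ℕ), 0 < P.t k j'), I P k :=
    (one_le_div hT).1 hC
  have hsplit := Finset.sum_filter_add_sum_filter_not P.N
    (fun k => ∃ j' ∈ ({j} : Finset ℕ), 0 < P.t k j') (fun k => I P k)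
  have hzero : ∑ k ∈ P.N.filter (fun k => ¬ ∃ j' ∈ ({j} : Finset ℕ), 0 < P.t k j'), I P k = 0 := by
    have hnn : 0 ≤ ∑ k ∈ P.N.filter (fun k => ¬ ∃ j' ∈ ({j} : Finset ℕ), 0 < P.t k j'), I P k :=
      Finset.sum_nonneg fun k hk => (hI P).1 k (Finset.mem_filter.1 hk).1
    linarith
  have hmem : i ∈ P.N.filter (fun k => ¬ ∃ j' ∈ ({j} : Finset ℕ), 0 < P.t k j') := by
    refine Finset.mem_filter.2 ⟨hi, ?_⟩
    rintro ⟨j', hj', hpos⟩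
    rw [Finset.mem_singleton] at hj'
    subst hj'
    omega
  have hle := (Finset.sum_eq_zero_iff_of_nonneg
    (fun k hk => (hI P).1 k (Finset.mem_filter.1 hk).1)).1 hzero
  exact hle i hmem

/-- Sum of the index over the streamed artists in a single-user problem. -/
lemma single_sumL {I : StreamingProblem → ℕ → ℝ} (hI : IsIndex I) (hAdd : AdditiveIndex I)
    (hEGI : EqualGlobalImpactUsers I) (hRLB : ReasonableLowerBound I)
    (P : StreamingProblem) {j : ℕ} (hM : P.M = {j}) :
    ∑ k ∈ P.N.filter (fun k => 0 < P.t k j), I P k = sig I P.N := by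
  have hsplit := Finset.sum_filter_add_sum_filter_not P.N (fun k => 0 < P.t k j) (fun k => I P k)
  have hzero : ∑ k ∈ P.N.filter (fun k => ¬ 0 < P.t k j), I P k = 0 := by
    apply Finset.sum_eq_zero
    intro k hk
    obtain ⟨hkN, hk0⟩ := Finset.mem_filter.1 hk
    exact single_zero hI hRLB P hM hkN (by omega)
  have := single_total hAdd hEGI P hM
  linarith
lemma sp1_Fset (N : Finset ℕ) (hN : N.Nonempty) (j : ℕ) (c : ℕ → ℕ)
    (hc : 0 < ∑ i ∈ N, c i) {i : ℕ} (hci : 0 < c i) :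
    (sp1 N hN j c hc).Fset i = {j} := by
  rw [StreamingProblem.Fset]
  exact Finset.filter_true_of_mem fun x _ => hci

/-- Constant-column case of the single-user valuation. -/
lemma sp1_const_val {I : StreamingProblem → ℕ → ℝ} (hI : IsIndex I) (hAdd : AdditiveIndex I)
    (hRLB : ReasonableLowerBound I) (hEGI : EqualGlobalImpactUsers I)
    (hOP : OrderPreservation I) (N : Finset ℕ) (hN : N.Nonempty) (j : ℕ) (c : ℕ → ℕ)
    (hc : 0 < ∑ i ∈ N, c i)
    (hconst : ∀ k ∈ N.filter (fun k => 0 < c k), ∀ k' ∈ N.filter (fun k => 0 < c k), c k = c k')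
    (i : ℕ) (hi : i ∈ N) (hci : 0 < c i) :
    I (sp1 N hN j c hc) i = sig I N / ((N.filter fun k => 0 < c k).card : ℝ) := by
  set P := sp1 N hN j c hc with hP
  have hiL : i ∈ N.filter (fun k => 0 < c k) := Finset.mem_filter.2 ⟨hi, hci⟩
  have hval : ∀ k ∈ N.filter (fun k => 0 < c k), I P k = I P i := by
    intro k hk
    have hkN : k ∈ N := (Finset.mem_filter.1 hk).1
    refine le_antisymm ?_ ?_
    · exact hOP P k hkN i hi fun j' _ => le_of_eq (hconst k hk i hiL)
    · exact hOP P i hi k hkN fun j' _ => le_of_eq (hconst i hiL k hk)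
  have hsum : ∑ k ∈ N.filter (fun k => 0 < c k), I P k = sig I N :=
    single_sumL hI hAdd hEGI hRLB P rfl
  have hcard : (0 : ℝ) < ((N.filter fun k => 0 < c k).card : ℝ) := by
    exact_mod_cast Finset.card_pos.2 ⟨i, hiL⟩
  have h2 : ((N.filter fun k => 0 < c k).card : ℝ) * I P i = sig I N := by
    rw [← hsum, Finset.sum_congr rfl hval, Finset.sum_const, nsmul_eq_mul]
  rw [eq_div_iff hcard.ne', mul_comm]
  exact h2

/-- Single-user valuation: each streamed artist gets `sig I N / |L|`. -/
lemma sp1_val {I : StreamingProblem → ℕ → ℝ} (hI : IsIndex I) (hAdd : AdditiveIndex I)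
    (hRLB : ReasonableLowerBound I) (hEGI : EqualGlobalImpactUsers I)
    (hOP : OrderPreservation I) (hNUM : NonUnilateralManipulability I) :
    ∀ n (N : Finset ℕ) (hN : N.Nonempty) (j : ℕ) (c : ℕ → ℕ) (hc : 0 < ∑ i ∈ N, c i),
      (∑ k ∈ N.filter (fun k => 0 < c k), ((N.filter (fun k => 0 < c k)).sup c - c k)) ≤ n →
      ∀ i ∈ N, 0 < c i →
      I (sp1 N hN j c hc) i = sig I N / ((N.filter fun k => 0 < c k).card : ℝ) := by
  intro n
  induction n with
  | zero =>
    intro N hN j c hc hD i hi hci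
    refine sp1_const_val hI hAdd hRLB hEGI hOP N hN j c hc ?_ i hi hci
    have hall : ∀ x ∈ N.filter (fun k => 0 < c k), c x = (N.filter (fun k => 0 < c k)).sup c := by
      intro x hx
      have hz := (Finset.sum_eq_zero_iff.1 (Nat.le_zero.1 hD)) x hx
      have hle : c x ≤ (N.filter (fun k => 0 < c k)).sup c := Finset.le_sup hx
      omega
    intro k hk k' hk'
    rw [hall k hk, hall k' hk']
  | succ n ih =>
    intro N hN j c hc hD i hi hci
    have hiL : i ∈ N.filter (fun k => 0 < c k) := Finset.mem_filter.2 ⟨hi, hci⟩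
    by_cases hex : ∃ k ∈ N.filter (fun k => 0 < c k), c k < (N.filter (fun k => 0 < c k)).sup c
    · -- inductive step
      have below : ∀ k ∈ N.filter (fun k => 0 < c k),
          c k < (N.filter (fun k => 0 < c k)).sup c →
          sig I N / ((N.filter fun k => 0 < c k).card : ℝ) ≤ I (sp1 N hN j c hc) k := by
        intro k hkL hkB
        obtain ⟨hkN, hk0⟩ := Finset.mem_filter.1 hkL
        set B := (N.filter (fun k => 0 < c k)).sup c with hBdef
        set ck := Function.update c k B with hck
        have hBpos : 0 < B := lt_of_le_of_lt (Nat.zero_le _) hkB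
        have hfilter : N.filter (fun x => 0 < ck x) = N.filter (fun k => 0 < c k) := by
          apply Finset.filter_congr
          intro x hx
          by_cases hxk : x = k
          · subst hxk; simp [hck, Function.update_self, hBpos, hk0]
          · simp [hck, Function.update_of_ne hxk]
        have hckpos : 0 < ∑ i ∈ N, ck i := by
          refine Finset.sum_pos' (fun _ _ => Nat.zero_le _) ⟨k, hkN, ?_⟩
          simpa [hck] using hBpos
        have hsup : (N.filter (fun x => 0 < ck x)).sup ck = B := by
          rw [hfilter]
          apply le_antisymm
          · apply Finset.sup_le
            intro x hx
            by_cases hxk : x = k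
            · subst hxk; simp [hck]
            · rw [hck, Function.update_of_ne hxk]
              exact Finset.le_sup hx
          · calc B = ck k := by rw [hck, Function.update_self]
              _ ≤ _ := Finset.le_sup hkL
        have hDck : ∑ x ∈ N.filter (fun x => 0 < ck x),
            ((N.filter (fun x => 0 < ck x)).sup ck - ck x) ≤ n := by
          rw [hsup, hfilter]
          have hterm : ∑ x ∈ N.filter (fun k => 0 < c k), (B - ck x)
              = ∑ x ∈ (N.filter (fun k => 0 < c k)).erase k, (B - c x) := by
            rw [← Finset.add_sum_erase _ _ hkL]
            have h0 : B - ck k = 0 := by simp [hck]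
            rw [h0, zero_add]
            refine Finset.sum_congr rfl fun x hx => ?_
            rw [hck, Function.update_of_ne (Finset.ne_of_mem_erase hx)]
          have hsplit : ∑ x ∈ N.filter (fun k => 0 < c k), (B - c x)
              = (B - c k) + ∑ x ∈ (N.filter (fun k => 0 < c k)).erase k, (B - c x) :=
            (Finset.add_sum_erase _ _ hkL).symm
          have hposk : 0 < B - c k := Nat.sub_pos_of_lt hkB
          omega
        have hIH := ih N hN j ck hckpos hDck k hkN (by simp [hck, hBpos])
        rw [hfilter] at hIH
        have hnum := hNUM (sp1 N hN j c hc) (sp1 N hN j ck hckpos) k hkN rfl rfl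
          (by rw [sp1_Fset N hN j c hc hk0, sp1_Fset N hN j ck hckpos (by simp [hck, hBpos])])
          (fun j' _ => by
            show c k ≤ ck k
            rw [hck, Function.update_self]
            exact hkB.le)
          (fun k' _ hne j' _ => by
            show c k' = ck k'
            rw [hck, Function.update_of_ne hne])
        rw [hIH] at hnum
        exact hnum
      have key : ∀ k ∈ N.filter (fun k => 0 < c k),
          sig I N / ((N.filter fun k => 0 < c k).card : ℝ) ≤ I (sp1 N hN j c hc) k := by
        intro k hkL
        by_cases hkB : c k < (N.filter (fun k => 0 < c k)).sup c
        · exact below k hkL hkB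
        · obtain ⟨k0, hk0L, hk0B⟩ := hex
          refine (below k0 hk0L hk0B).trans ?_
          refine hOP _ k0 (Finset.mem_filter.1 hk0L).1 k (Finset.mem_filter.1 hkL).1
            fun j' _ => ?_
          show c k0 ≤ c k
          have : c k = (N.filter (fun k => 0 < c k)).sup c :=
            le_antisymm (Finset.le_sup hkL) (not_lt.1 hkB)
          omega
      have hsum : ∑ k ∈ N.filter (fun k => 0 < c k), I (sp1 N hN j c hc) k = sig I N :=
        single_sumL hI hAdd hEGI hRLB _ rfl
      have hcard : (0 : ℝ) < ((N.filter fun k => 0 < c k).card : ℝ) := by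
        exact_mod_cast Finset.card_pos.2 ⟨i, hiL⟩
      refine le_antisymm ?_ (key i hiL)
      by_contra hlt
      push_neg at hlt
      have hstrict := Finset.sum_lt_sum (fun k hk => key k hk) ⟨i, hiL, hlt⟩
      rw [hsum, Finset.sum_const, nsmul_eq_mul] at hstrict
      rw [mul_div_assoc', mul_comm, mul_div_assoc, div_self hcard.ne', mul_one] at hstrict
      exact lt_irrefl _ hstrict
    · -- constant case
      push_neg at hex
      refine sp1_const_val hI hAdd hRLB hEGI hOP N hN j c hc ?_ i hi hci
      intro k hk k' hk'
      have h1 : c k = (N.filter (fun k => 0 < c k)).sup c :=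
        le_antisymm (Finset.le_sup hk) (hex k hk)
      have h2 : c k' = (N.filter (fun k => 0 < c k)).sup c :=
        le_antisymm (Finset.le_sup hk') (hex k' hk')
      omega

/-- Valuation in a general single-user problem. -/
lemma single_val {I : StreamingProblem → ℕ → ℝ} (hI : IsIndex I) (hAdd : AdditiveIndex I)
    (hRLB : ReasonableLowerBound I) (hEGI : EqualGlobalImpactUsers I)
    (hOP : OrderPreservation I) (hNUM : NonUnilateralManipulability I)
    (P : StreamingProblem) {j : ℕ} (hM : P.M = {j}) {i : ℕ} (hi : i ∈ P.N)
    (hpos : 0 < P.t i j) :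
    I P i = sig I P.N / ((P.Lset j).card : ℝ) := by
  have hjM : j ∈ P.M := by rw [hM]; exact Finset.mem_singleton_self j
  have hc : 0 < ∑ k ∈ P.N, P.t k j := P.streams_pos j hjM
  have e : I P i = I (sp1 P.N P.N_nonempty j (fun k => P.t k j) hc) i := by
    refine (ext0 hAdd P (sp1 P.N P.N_nonempty j (fun k => P.t k j) hc) rfl hM.symm ?_ hi).symm
    intro k _ j' hj'
    rw [hM] at hj'
    have : j' = j := Finset.mem_singleton.1 hj'
    subst this
    rfl
  rw [e, sp1_val hI hAdd hRLB hEGI hOP hNUM _ P.N P.N_nonempty j _ hc le_rfl i hi hpos]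
  rfl
/-- Forward formula: the index is `sig I N` times the Shapley index. -/
lemma forward_formula {I : StreamingProblem → ℕ → ℝ} (hI : IsIndex I) (hAdd : AdditiveIndex I)
    (hRLB : ReasonableLowerBound I) (hEGI : EqualGlobalImpactUsers I)
    (hOP : OrderPreservation I) (hNUM : NonUnilateralManipulability I)
    (P : StreamingProblem) (i : ℕ) (hi : i ∈ P.N) :
    I P i = sig I P.N * P.Sh i := by
  rw [decomp_aux hAdd P.M.card P rfl i hi]
  have step : ∀ j ∈ P.M, I (spCol P j) i =
      (if 0 < P.t i j then sig I P.N / ((P.Lset j).card : ℝ) else 0) := by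
    intro j hj
    by_cases hpos : 0 < P.t i j
    · rw [if_pos hpos]
      have hLs : (spCol P j).Lset j = P.Lset j := by
        rw [StreamingProblem.Lset, StreamingProblem.Lset, spCol_N P hj]
        exact Finset.filter_congr fun k _ => by rw [spCol_t P hj]
      have hQV := single_val hI hAdd hRLB hEGI hOP hNUM (spCol P j) (spCol_M P hj)
        (i := i) (by rw [spCol_N P hj]; exact hi) (by simp only [spCol_t P hj]; exact hpos)
      rw [hQV, spCol_N P hj, hLs]
    · rw [if_neg hpos]
      refine single_zero hI hRLB (spCol P j) (spCol_M P hj) (by rw [spCol_N P hj]; exact hi) ?_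
      simp only [spCol_t P hj]
      omega
  rw [Finset.sum_congr rfl step, ← Finset.sum_filter, StreamingProblem.Sh, Finset.mul_sum]
  exact Finset.sum_congr rfl fun j hj => (mul_one_div _ _).symm
/-- Additivity of the Shapley index. -/
lemma Sh_add (P P₁ P₂ : StreamingProblem) (h1N : P₁.N = P.N) (h2N : P₂.N = P.N)
    (hM : P.M = P₁.M ∪ P₂.M) (hdisj : Disjoint P₁.M P₂.M)
    (ht1 : ∀ i ∈ P.N, ∀ j ∈ P₁.M, P.t i j = P₁.t i j)
    (ht2 : ∀ i ∈ P.N, ∀ j ∈ P₂.M, P.t i j = P₂.t i j)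
    {i : ℕ} (hi : i ∈ P.N) : P.Sh i = P₁.Sh i + P₂.Sh i := by
  have hL1 : ∀ j ∈ P₁.M, P.Lset j = P₁.Lset j := by
    intro j hj
    rw [StreamingProblem.Lset, StreamingProblem.Lset, h1N]
    exact Finset.filter_congr fun k hk => by rw [ht1 k hk j hj]
  have hL2 : ∀ j ∈ P₂.M, P.Lset j = P₂.Lset j := by
    intro j hj
    rw [StreamingProblem.Lset, StreamingProblem.Lset, h2N]
    exact Finset.filter_congr fun k hk => by rw [ht2 k hk j hj]
  rw [Sh_eq_sum_ite, Sh_eq_sum_ite, Sh_eq_sum_ite, hM, Finset.sum_union hdisj]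
  congr 1
  · refine Finset.sum_congr rfl fun j hj => ?_
    rw [ht1 i hi j hj, hL1 j hj]
  · refine Finset.sum_congr rfl fun j hj => ?_
    rw [ht2 i hi j hj, hL2 j hj]

/-- Reasonable-lower-bound inequality for the Shapley index. -/
lemma Sh_lower (P : StreamingProblem) (C : Finset ℕ) (hC : C ⊆ P.M) :
    (C.card : ℝ) ≤ ∑ i ∈ P.N.filter (fun i => ∃ j ∈ C, 0 < P.t i j), P.Sh i := by
  set NC := P.N.filter (fun i => ∃ j ∈ C, 0 < P.t i j) with hNC
  have hA : ∀ j ∈ C, NC.filter (fun i => 0 < P.t i j) = P.Lset j := by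
    intro j hj
    ext i
    simp only [hNC, Finset.mem_filter, StreamingProblem.Lset]
    constructor
    · rintro ⟨⟨hiN, _⟩, hpos⟩; exact ⟨hiN, hpos⟩
    · rintro ⟨hiN, hpos⟩; exact ⟨⟨hiN, j, hj, hpos⟩, hpos⟩
  have hB : ∀ j ∈ C, ∑ i ∈ NC, (if 0 < P.t i j then (1 : ℝ) / ((P.Lset j).card : ℝ) else 0) = 1 := by
    intro j hj
    rw [← Finset.sum_filter, hA j hj, Finset.sum_const, nsmul_eq_mul]
    have hc := Lset_card_pos P (hC hj)
    field_simp
  calc (C.card : ℝ) = ∑ j ∈ C, (1 : ℝ) := by simp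
    _ = ∑ j ∈ C, ∑ i ∈ NC, (if 0 < P.t i j then (1 : ℝ) / ((P.Lset j).card : ℝ) else 0) :=
        (Finset.sum_congr rfl hB).symm
    _ = ∑ i ∈ NC, ∑ j ∈ C, (if 0 < P.t i j then (1 : ℝ) / ((P.Lset j).card : ℝ) else 0) :=
        Finset.sum_comm
    _ ≤ ∑ i ∈ NC, ∑ j ∈ P.M, (if 0 < P.t i j then (1 : ℝ) / ((P.Lset j).card : ℝ) else 0) := by
        refine Finset.sum_le_sum fun i _ => ?_
        refine Finset.sum_le_sum_of_subset_of_nonneg hC fun j hj _ => ?_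
        positivity
    _ = ∑ i ∈ NC, P.Sh i := Finset.sum_congr rfl fun i _ => (Sh_eq_sum_ite P i).symm

/-- The Shapley index is invariant under unilateral stream changes with fixed fans. -/
lemma Sh_num (P P' : StreamingProblem) {i : ℕ} (hi : i ∈ P.N) (hN : P'.N = P.N)
    (hM : P'.M = P.M) (hF : P.Fset i = P'.Fset i)
    (hother : ∀ k ∈ P.N, k ≠ i → ∀ j ∈ P.M, P.t k j = P'.t k j) :
    P'.Sh i = P.Sh i := by
  have hFs : P'.M.filter (fun j => 0 < P'.t i j) = P.M.filter (fun j => 0 < P.t i j) := hF.symm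
  rw [StreamingProblem.Sh, StreamingProblem.Sh, hFs]
  refine Finset.sum_congr rfl fun j hj => ?_
  obtain ⟨hjM, hjpos⟩ := Finset.mem_filter.1 hj
  have hjpos' : 0 < P'.t i j := by
    have : j ∈ P'.Fset i := hF ▸ Finset.mem_filter.2 ⟨hjM, hjpos⟩
    exact (Finset.mem_filter.1 this).2
  have hLs : P'.Lset j = P.Lset j := by
    rw [StreamingProblem.Lset, StreamingProblem.Lset, hN]
    refine Finset.filter_congr fun k hk => ?_
    by_cases hki : k = i
    · subst hki; simp [hjpos, hjpos']
    · rw [hother k hk hki j hjM]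
  rw [hLs]
/-- Characterization of the Shapley index. -/
theorem shapley_characterization_3 (I : StreamingProblem → ℕ → ℝ) (hI : IsIndex I) :
    ((AdditiveIndex I ∧ ReasonableLowerBound I ∧ EqualGlobalImpactUsers I ∧ OrderPreservation I ∧ NonUnilateralManipulability I) ↔
      ∃ lam : Finset ℕ → ℝ, (∀ N : Finset ℕ, 0 < lam N) ∧
        ∀ P : StreamingProblem, ∀ i ∈ P.N, I P i = lam P.N * P.Sh i) ∧
    ((AdditiveIndex I ∧ ReasonableLowerBound I ∧ EqualGlobalImpactUsers I ∧ OrderPreservation I ∧ NonUnilateralManipulability I) →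
      ∀ P : StreamingProblem, ∀ i ∈ P.N, Reward I P i = P.Sh i) := by
  constructor
  · constructor
    · rintro ⟨hAdd, hRLB, hEGI, hOP, hNUM⟩
      exact ⟨sig I, sig_pos hI, fun P i hi => forward_formula hI hAdd hRLB hEGI hOP hNUM P i hi⟩
    · rintro ⟨lam, hlam, hform⟩
      have hsumI : ∀ P : StreamingProblem, ∑ k ∈ P.N, I P k = lam P.N * (P.M.card : ℝ) := by
        intro P
        rw [Finset.sum_congr rfl (fun k hk => hform P k hk), ← Finset.mul_sum, sum_Sh]
      refine ⟨?_, ?_, ?_, ?_, ?_⟩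
      · -- Additivity
        intro P P₁ P₂ h1N h2N hM hdisj ht1 ht2 i hi
        have hi1 : i ∈ P₁.N := by rw [h1N]; exact hi
        have hi2 : i ∈ P₂.N := by rw [h2N]; exact hi
        rw [hform P i hi, hform P₁ i hi1, hform P₂ i hi2,
          Sh_add P P₁ P₂ h1N h2N hM hdisj ht1 ht2 hi, h1N, h2N, mul_add]
      · -- Reasonable lower bound
        intro P C hC
        have hm : (0 : ℝ) < (P.M.card : ℝ) := by exact_mod_cast P.M_nonempty.card_pos
        have hl := hlam P.N
        have hSf : ∑ i ∈ P.N.filter (fun i => ∃ j ∈ C, 0 < P.t i j), I P i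
            = lam P.N * ∑ i ∈ P.N.filter (fun i => ∃ j ∈ C, 0 < P.t i j), P.Sh i := by
          rw [Finset.sum_congr rfl (fun i hi => hform P i (Finset.mem_filter.1 hi).1),
            Finset.mul_sum]
        rw [hsumI P, hSf]
        have hq : lam P.N * (∑ i ∈ P.N.filter (fun i => ∃ j ∈ C, 0 < P.t i j), P.Sh i)
            * (P.M.card : ℝ) / (lam P.N * (P.M.card : ℝ))
            = ∑ i ∈ P.N.filter (fun i => ∃ j ∈ C, 0 < P.t i j), P.Sh i := by
          field_simp
        rw [hq]
        exact Sh_lower P C hC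
      · -- Equal global impact of users
        intro P Q Q' j hj j' hj' hne hQN hQM hQt hQ'N hQ'M hQ't
        rw [hsumI Q, hsumI Q', hQN, hQ'N, hQM, hQ'M,
          Finset.card_erase_of_mem hj, Finset.card_erase_of_mem hj']
      · -- Order preservation
        intro P i hi i' hi' hle
        rw [hform P i hi, hform P i' hi']
        refine mul_le_mul_of_nonneg_left ?_ (hlam P.N).le
        rw [StreamingProblem.Sh, StreamingProblem.Sh]
        refine Finset.sum_le_sum_of_subset_of_nonneg ?_ ?_
        · intro j hj
          obtain ⟨hjM, hpos⟩ := Finset.mem_filter.1 hj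
          exact Finset.mem_filter.2 ⟨hjM, lt_of_lt_of_le hpos (hle j hjM)⟩
        · intro j _ _
          positivity
      · -- Non-unilateral manipulability
        intro P P' i hi hN' hM' hF hle hother
        have hi' : i ∈ P'.N := by rw [hN']; exact hi
        rw [hform P i hi, hform P' i hi', hN',
          Sh_num P P' hi hN' hM' hF hother]
  · rintro ⟨hAdd, hRLB, hEGI, hOP, hNUM⟩ P i hi
    have hform := forward_formula hI hAdd hRLB hEGI hOP hNUM
    have hsumI : ∑ k ∈ P.N, I P k = sig I P.N * (P.M.card : ℝ) := by
      rw [Finset.sum_congr rfl (fun k hk => hform P k hk), ← Finset.mul_sum, sum_Sh]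
    have hm : (0 : ℝ) < (P.M.card : ℝ) := by exact_mod_cast P.M_nonempty.card_pos
    have hs := sig_pos hI P.N
    rw [Reward, hform P i hi, hsumI]
    field_simp
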